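/- arXiv:2102.06115 — 5 statements merged into one kernel-verified Lean document; each statement's English description precedes it below -/
import Mathlib

section
/- Double-budget trick: if W_1 is an outcome with c(W_1) ≤ b maximizing total social welfare sw over all budget-feasible outcomes, and W_2 is any district-fair outcome with c(W_2) ≤ b, then W_1 ∪ W_2 is district-fair, has cost at most 2b, and has total social welfare at least that of any budget-feasible district-fair outcome. -/
/-- Double-budget trick. -/
theorem double_budget_trick
    {P : Type*} [Fintype P] [DecidableEq P] {k : ℕ}
    (c : P → ℕ) (sw : Fin k → P → ℕ) (b : ℕ) (bd : Fin k → ℕ)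
    (hb : ∑ i, bd i = b) (f : Fin k → ℕ)
    (hf : ∀ i, IsGreatest
      {v | ∃ A : Finset P, ∑ x ∈ A, c x ≤ bd i ∧ v = ∑ x ∈ A, sw i x} (f i))
    (W1 W2 : Finset P)
    (hW1b : ∑ x ∈ W1, c x ≤ b)
    (hW1max : ∀ A : Finset P, ∑ x ∈ A, c x ≤ b →
      ∑ i, ∑ x ∈ A, sw i x ≤ ∑ i, ∑ x ∈ W1, sw i x)
    (hW2b : ∑ x ∈ W2, c x ≤ b)
    (hW2fair : ∀ i, f i ≤ ∑ x ∈ W2, sw i x) :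
    (∀ i, f i ≤ ∑ x ∈ W1 ∪ W2, sw i x) ∧
    (∑ x ∈ W1 ∪ W2, c x ≤ 2 * b) ∧
    (∀ W : Finset P, ∑ x ∈ W, c x ≤ b → (∀ i, f i ≤ ∑ x ∈ W, sw i x) →
      ∑ i, ∑ x ∈ W, sw i x ≤ ∑ i, ∑ x ∈ W1 ∪ W2, sw i x) := by
  refine ⟨fun i => le_trans (hW2fair i) (Finset.sum_le_sum_of_subset Finset.subset_union_right), ?_, ?_⟩
  · calc ∑ x ∈ W1 ∪ W2, c x ≤ ∑ x ∈ W1, c x + ∑ x ∈ W2, c x :=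
          by
          have := Finset.sum_union_inter (s₁ := W1) (s₂ := W2) (f := c)
          omega
      _ ≤ b + b := add_le_add hW1b hW2b
      _ = 2 * b := (two_mul b).symm
  · intro W hWb _
    refine le_trans (hW1max W hWb) (Finset.sum_le_sum fun i _ => ?_)
    exact Finset.sum_le_sum_of_subset Finset.subset_union_left
end

section
/- For any district i, the per-district coverage function cover_i(W) = b_i − resid_i(W) is a nondecreasing submodular set function of W, where resid_i(W) is the minimum cost of a fractional outcome p (with p_j = 0 for x_j ∈ W, 0 ≤ p_j ≤ 1) such that sw_i(W) + sw_i(p) ≥ f_i. -/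
open Finset

/-- A fractional outcome `p` is feasible for district welfare `sw`, fair share
`f` and (integral) outcome `W` if it has entries in `[0,1]`, is supported off
`W`, and together with `W` reaches welfare `f`. -/
def FracFeasible {m : ℕ} (sw : Fin m → ℝ) (f : ℝ) (W : Finset (Fin m))
    (p : Fin m → ℝ) : Prop :=
  (∀ j, 0 ≤ p j ∧ p j ≤ 1) ∧ (∀ j ∈ W, p j = 0) ∧
    f ≤ (∑ j ∈ W, sw j) + ∑ j, p j * sw j

/-- `resid` is the minimum cost of a feasible fractional completion. -/
noncomputable def resid {m : ℕ} (c sw : Fin m → ℝ) (f : ℝ)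
    (W : Finset (Fin m)) : ℝ :=
  sInf ((fun p : Fin m → ℝ => ∑ j, p j * c j) '' {p | FracFeasible sw f W p})

/-- `cover` is the budget minus the residual budget requirement. -/
noncomputable def cover {m : ℕ} (c sw : Fin m → ℝ) (f b : ℝ)
    (W : Finset (Fin m)) : ℝ :=
  b - resid c sw f W

namespace CoverAux

variable {m : ℕ}

/-- The LP-dual objective value, written in a form modular in `W`. -/
noncomputable def dualVal (c sw : Fin m → ℝ) (f y : ℝ) (W : Finset (Fin m)) : ℝ :=
  y * f - (∑ j, max (y * sw j - c j) 0) - ∑ j ∈ W, min (y * sw j) (c j)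

lemma dualVal_insert (c sw : Fin m → ℝ) (f y : ℝ) {W : Finset (Fin m)} {x : Fin m}
    (hx : x ∉ W) :
    dualVal c sw f y (insert x W) = dualVal c sw f y W - min (y * sw x) (c x) := by
  unfold dualVal
  rw [Finset.sum_insert hx]
  ring

lemma dualVal_sdiff (c sw : Fin m → ℝ) (f y : ℝ) {A B : Finset (Fin m)} (hAB : A ⊆ B) :
    dualVal c sw f y A - dualVal c sw f y B = ∑ j ∈ B \ A, min (y * sw j) (c j) := by
  unfold dualVal
  rw [← Finset.sum_sdiff hAB (f := fun j => min (y * sw j) (c j))]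
  ring

lemma max_add_min (u v : ℝ) : max (u - v) 0 + min u v = u := by
  rcases le_total u v with h | h
  · rw [max_eq_right (by linarith), min_eq_left h]; ring
  · rw [max_eq_left (by linarith), min_eq_right h]; ring

/-- Weak duality. -/
lemma weak_duality (c sw : Fin m → ℝ) (f : ℝ) (hc : ∀ j, 0 ≤ c j) {y : ℝ} (hy : 0 ≤ y)
    {W : Finset (Fin m)} {p : Fin m → ℝ} (hp : FracFeasible sw f W p) :
    dualVal c sw f y W ≤ ∑ j, p j * c j := by
  obtain ⟨hb, hz, hw⟩ := hp
  have e1 : ∑ j ∈ W, (y * sw j) =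
      ∑ j ∈ W, max (y * sw j - c j) 0 + ∑ j ∈ W, min (y * sw j) (c j) := by
    rw [← Finset.sum_add_distrib]
    exact Finset.sum_congr rfl fun j _ => (max_add_min (y * sw j) (c j)).symm
  have e2 : ∑ j, max (y * sw j - c j) 0 =
      ∑ j ∈ W, max (y * sw j - c j) 0 + ∑ j ∈ Wᶜ, max (y * sw j - c j) 0 :=
    (Finset.sum_add_sum_compl W _).symm
  have e3 : ∑ j, p j * sw j = ∑ j ∈ Wᶜ, p j * sw j := by
    rw [← Finset.sum_add_sum_compl W (fun j => p j * sw j)]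
    have h0 : ∑ j ∈ W, p j * sw j = 0 :=
      Finset.sum_eq_zero fun j hj => by rw [hz j hj, zero_mul]
    rw [h0, zero_add]
  have e4 : ∑ j, p j * c j = ∑ j ∈ Wᶜ, p j * c j := by
    rw [← Finset.sum_add_sum_compl W (fun j => p j * c j)]
    have h0 : ∑ j ∈ W, p j * c j = 0 :=
      Finset.sum_eq_zero fun j hj => by rw [hz j hj, zero_mul]
    rw [h0, zero_add]
  have e5 : ∀ j ∈ Wᶜ, y * (p j * sw j) ≤ p j * c j + max (y * sw j - c j) 0 := by
    intro j _
    rcases le_total (y * sw j) (c j) with h | h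
    · have hm : max (y * sw j - c j) 0 = 0 := max_eq_right (by linarith)
      have h2 : p j * (y * sw j) ≤ p j * c j := mul_le_mul_of_nonneg_left h (hb j).1
      rw [hm]; nlinarith [h2]
    · have hm : max (y * sw j - c j) 0 = y * sw j - c j := max_eq_left (by linarith)
      have h2 : p j * (y * sw j - c j) ≤ 1 * (y * sw j - c j) :=
        mul_le_mul_of_nonneg_right (hb j).2 (by linarith)
      rw [hm]; nlinarith [h2]
  have e7 : ∑ j ∈ Wᶜ, y * (p j * sw j) ≤
      ∑ j ∈ Wᶜ, p j * c j + ∑ j ∈ Wᶜ, max (y * sw j - c j) 0 := by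
    rw [← Finset.sum_add_distrib]
    exact Finset.sum_le_sum e5
  have hyf : y * f ≤ ∑ j ∈ W, y * sw j + ∑ j ∈ Wᶜ, y * (p j * sw j) := by
    have := mul_le_mul_of_nonneg_left hw hy
    calc y * f ≤ y * ((∑ j ∈ W, sw j) + ∑ j, p j * sw j) := this
      _ = ∑ j ∈ W, y * sw j + ∑ j ∈ Wᶜ, y * (p j * sw j) := by
          rw [e3, mul_add, Finset.mul_sum, Finset.mul_sum]
  unfold dualVal
  linarith

variable (c sw : Fin m → ℝ) (f : ℝ)

lemma bddBelow_costs (hc : ∀ j, 0 ≤ c j) (W : Finset (Fin m)) :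
    BddBelow ((fun p : Fin m → ℝ => ∑ j, p j * c j) '' {p | FracFeasible sw f W p}) := by
  refine ⟨0, ?_⟩
  rintro r ⟨p, hp, rfl⟩
  exact Finset.sum_nonneg fun j _ => mul_nonneg (hp.1 j).1 (hc j)

lemma resid_le_cost (hc : ∀ j, 0 ≤ c j) {W : Finset (Fin m)} {p : Fin m → ℝ}
    (hp : FracFeasible sw f W p) : resid c sw f W ≤ ∑ j, p j * c j :=
  csInf_le (bddBelow_costs c sw f hc W) ⟨p, hp, rfl⟩

lemma dual_le_resid (hc : ∀ j, 0 ≤ c j) {y : ℝ} (hy : 0 ≤ y) {W : Finset (Fin m)}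
    (hne : ∃ p, FracFeasible sw f W p) : dualVal c sw f y W ≤ resid c sw f W := by
  obtain ⟨p₀, hp₀⟩ := hne
  refine le_csInf ⟨_, p₀, hp₀, rfl⟩ ?_
  rintro r ⟨p, hp, rfl⟩
  exact weak_duality c sw f hc hy hp

/-- Zeroing out coordinates in a superset keeps feasibility and lowers cost. -/
lemma feas_of_subset (hc : ∀ j, 0 ≤ c j) (hsw : ∀ j, 0 ≤ sw j)
    {A B : Finset (Fin m)} (hAB : A ⊆ B) {p : Fin m → ℝ}
    (hp : FracFeasible sw f A p) :
    FracFeasible sw f B (fun j => if j ∈ B then 0 else p j) ∧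
      ∑ j, (if j ∈ B then 0 else p j) * c j ≤ ∑ j, p j * c j := by
  obtain ⟨hbd, hz, hw⟩ := hp
  have h1 : ∑ j, (if j ∈ B then 0 else p j) * sw j = ∑ j ∈ Bᶜ, p j * sw j := by
    rw [← Finset.sum_add_sum_compl B (fun j => (if j ∈ B then 0 else p j) * sw j)]
    have hB : ∑ j ∈ B, (if j ∈ B then 0 else p j) * sw j = 0 :=
      Finset.sum_eq_zero fun j hj => by rw [if_pos hj, zero_mul]
    have hBc : ∑ j ∈ Bᶜ, (if j ∈ B then 0 else p j) * sw j = ∑ j ∈ Bᶜ, p j * sw j :=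
      Finset.sum_congr rfl fun j hj => by rw [if_neg (Finset.mem_compl.mp hj)]
    rw [hB, hBc, zero_add]
  have h2 : ∑ j, p j * sw j = ∑ j ∈ B, p j * sw j + ∑ j ∈ Bᶜ, p j * sw j :=
    (Finset.sum_add_sum_compl B _).symm
  have h3 : ∑ j ∈ B, p j * sw j ≤ ∑ j ∈ B \ A, sw j := by
    have hsd : ∑ j ∈ B \ A, p j * sw j + ∑ j ∈ A, p j * sw j = ∑ j ∈ B, p j * sw j :=
      Finset.sum_sdiff hAB
    have hA0 : ∑ j ∈ A, p j * sw j = 0 :=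
      Finset.sum_eq_zero fun j hj => by rw [hz j hj, zero_mul]
    have hle : ∑ j ∈ B \ A, p j * sw j ≤ ∑ j ∈ B \ A, sw j :=
      Finset.sum_le_sum fun j _ => by
        calc p j * sw j ≤ 1 * sw j := mul_le_mul_of_nonneg_right (hbd j).2 (hsw j)
          _ = sw j := one_mul _
    linarith
  have h4 : ∑ j ∈ B \ A, sw j + ∑ j ∈ A, sw j = ∑ j ∈ B, sw j := Finset.sum_sdiff hAB
  refine ⟨⟨fun j => ?_, fun j hj => if_pos hj, ?_⟩, ?_⟩
  · simp only
    split_ifs with h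
    · exact ⟨le_refl 0, zero_le_one⟩
    · exact hbd j
  · rw [h1]; linarith
  · refine Finset.sum_le_sum fun j _ => ?_
    split_ifs with h
    · rw [zero_mul]; exact mul_nonneg (hbd j).1 (hc j)
    · exact le_refl _

lemma feas_nonempty (hc : ∀ j, 0 ≤ c j) (hsw : ∀ j, 0 ≤ sw j)
    (hach : ∃ p, FracFeasible sw f ∅ p) (W : Finset (Fin m)) :
    ∃ p, FracFeasible sw f W p := by
  obtain ⟨p, hp⟩ := hach
  exact ⟨_, (feas_of_subset c sw f hc hsw (Finset.empty_subset W) hp).1⟩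

lemma resid_mono (hc : ∀ j, 0 ≤ c j) (hsw : ∀ j, 0 ≤ sw j)
    {A B : Finset (Fin m)} (hAB : A ⊆ B)
    (hne : ∃ p, FracFeasible sw f A p) : resid c sw f B ≤ resid c sw f A := by
  obtain ⟨p₀, hp₀⟩ := hne
  refine le_csInf ⟨_, p₀, hp₀, rfl⟩ ?_
  rintro r ⟨p, hp, rfl⟩
  obtain ⟨hfeas, hcost⟩ := feas_of_subset c sw f hc hsw hAB hp
  exact le_trans (resid_le_cost c sw f hc hfeas) hcost
lemma dualVal_eq (y : ℝ) (W : Finset (Fin m)) :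
    dualVal c sw f y W = y * (f - ∑ j ∈ W, sw j) - ∑ j ∈ Wᶜ, max (y * sw j - c j) 0 := by
  unfold dualVal
  have e2 : ∑ j, max (y * sw j - c j) 0 =
      ∑ j ∈ W, max (y * sw j - c j) 0 + ∑ j ∈ Wᶜ, max (y * sw j - c j) 0 :=
    (Finset.sum_add_sum_compl W _).symm
  have e1 : ∑ j ∈ W, max (y * sw j - c j) 0 + ∑ j ∈ W, min (y * sw j) (c j)
      = ∑ j ∈ W, y * sw j := by
    rw [← Finset.sum_add_distrib]; exact Finset.sum_congr rfl fun j _ => max_add_min _ _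
  have e3 : y * (f - ∑ j ∈ W, sw j) = y * f - ∑ j ∈ W, y * sw j := by
    rw [mul_sub, Finset.mul_sum]
  linarith

/-- Strong duality: some dual value reaches the residual cost. -/
lemma strong_duality (hc : ∀ j, 0 ≤ c j) (hsw : ∀ j, 0 ≤ sw j)
    {W : Finset (Fin m)} (hne : ∃ p, FracFeasible sw f W p) :
    ∃ y, 0 ≤ y ∧ resid c sw f W ≤ dualVal c sw f y W := by
  set d : ℝ := f - ∑ j ∈ W, sw j with hd
  by_cases hd0 : d ≤ 0
  · refine ⟨0, le_refl 0, ?_⟩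
    have hp0 : FracFeasible sw f W (fun _ => 0) := by
      refine ⟨fun j => ⟨le_refl 0, zero_le_one⟩, fun j _ => rfl, ?_⟩
      simp only [zero_mul, Finset.sum_const_zero, add_zero]
      linarith
    have h1 : resid c sw f W ≤ 0 := by
      have := resid_le_cost c sw f hc hp0
      simpa using this
    have h2 : dualVal c sw f 0 W = 0 := by
      unfold dualVal
      have hmax : ∀ j : Fin m, max (0 * sw j - c j) 0 = 0 := fun j =>
        max_eq_right (by rw [zero_mul, zero_sub]; exact neg_nonpos.mpr (hc j))
      have hmin : ∀ j : Fin m, min ((0:ℝ) * sw j) (c j) = 0 := fun j => by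
        rw [zero_mul]; exact min_eq_left (hc j)
      have s1 : ∑ j : Fin m, max (0 * sw j - c j) 0 = 0 :=
        Finset.sum_eq_zero fun j _ => hmax j
      have s2 : ∑ j ∈ W, min ((0:ℝ) * sw j) (c j) = 0 :=
        Finset.sum_eq_zero fun j _ => hmin j
      rw [s1, s2]; ring
    rw [h2]; exact h1
  push_neg at hd0
  obtain ⟨p₀, hbd₀, hz₀, hw₀⟩ := hne
  set N : Finset (Fin m) := Wᶜ with hN
  have htot : d ≤ ∑ j ∈ N, sw j := by
    have e3 : ∑ j, p₀ j * sw j = ∑ j ∈ N, p₀ j * sw j := by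
      rw [← Finset.sum_add_sum_compl W (fun j => p₀ j * sw j)]
      have h0 : ∑ j ∈ W, p₀ j * sw j = 0 :=
        Finset.sum_eq_zero fun j hj => by rw [hz₀ j hj, zero_mul]
      rw [h0, zero_add]
    have hle : ∑ j ∈ N, p₀ j * sw j ≤ ∑ j ∈ N, sw j :=
      Finset.sum_le_sum fun j _ => by
        calc p₀ j * sw j ≤ 1 * sw j := mul_le_mul_of_nonneg_right (hbd₀ j).2 (hsw j)
          _ = sw j := one_mul _
    rw [e3] at hw₀
    linarith
  set Y : Finset ℝ :=
    insert (0:ℝ) ((N.filter fun j => 0 < sw j).image fun j => c j / sw j) with hYdef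
  have hYne : Y.Nonempty := ⟨0, Finset.mem_insert_self _ _⟩
  have hYnonneg : ∀ y ∈ Y, 0 ≤ y := by
    intro y hy
    rcases Finset.mem_insert.mp hy with h | h
    · exact h.ge
    · obtain ⟨j, hj, rfl⟩ := Finset.mem_image.mp h
      exact div_nonneg (hc j) (hsw j)
  set S : ℝ → ℝ := fun y => ∑ j ∈ N.filter (fun j => c j ≤ y * sw j), sw j with hS
  set ymax := Y.max' hYne with hym
  have hSmax : d ≤ S ymax := by
    have hsub : N.filter (fun j => 0 < sw j) ⊆ N.filter (fun j => c j ≤ ymax * sw j) := by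
      intro j hj
      obtain ⟨hjN, hjs⟩ := Finset.mem_filter.mp hj
      refine Finset.mem_filter.mpr ⟨hjN, ?_⟩
      have hmem : c j / sw j ∈ Y :=
        Finset.mem_insert_of_mem (Finset.mem_image_of_mem _ hj)
      exact (div_le_iff₀ hjs).mp (Y.le_max' _ hmem)
    have h1 : ∑ j ∈ N.filter (fun j => 0 < sw j), sw j = ∑ j ∈ N, sw j :=
      Finset.sum_filter_of_ne fun j hj hne0 => lt_of_le_of_ne (hsw j) (Ne.symm hne0)
    have h2 : ∑ j ∈ N.filter (fun j => 0 < sw j), sw j ≤ S ymax :=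
      Finset.sum_le_sum_of_subset_of_nonneg hsub fun j _ _ => hsw j
    linarith
  set Y' := Y.filter (fun y => d ≤ S y) with hY'
  have hY'ne : Y'.Nonempty := ⟨ymax, Finset.mem_filter.mpr ⟨Y.max'_mem hYne, hSmax⟩⟩
  set y0 := Y'.min' hY'ne with hy0def
  have hy0Y : y0 ∈ Y := (Finset.mem_filter.mp (Y'.min'_mem hY'ne)).1
  have hy0S : d ≤ S y0 := (Finset.mem_filter.mp (Y'.min'_mem hY'ne)).2
  have hy0 : 0 ≤ y0 := hYnonneg y0 hy0Y
  have hminprop : ∀ y ∈ Y, y < y0 → S y < d := by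
    intro y hy hlt
    by_contra hcon
    push_neg at hcon
    exact absurd (Y'.min'_le y (Finset.mem_filter.mpr ⟨hy, hcon⟩)) (not_le.mpr hlt)
  set F := N.filter (fun j => c j < y0 * sw j) with hF
  set T := N.filter (fun j => c j ≤ y0 * sw j) with hT
  have hFT : F ⊆ T := by
    intro j hj
    obtain ⟨h1, h2⟩ := Finset.mem_filter.mp hj
    exact Finset.mem_filter.mpr ⟨h1, le_of_lt h2⟩
  set a := ∑ j ∈ F, sw j with ha
  set s := ∑ j ∈ T, sw j with hs
  have hds : d ≤ s := hy0S
  have haF : ∀ j ∈ F, 0 < sw j := by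
    intro j hj
    have hjlt := (Finset.mem_filter.mp hj).2
    by_contra hcon
    push_neg at hcon
    have : y0 * sw j ≤ 0 := mul_nonpos_of_nonneg_of_nonpos hy0 hcon
    linarith [hc j]
  have had : a ≤ d := by
    rcases Finset.eq_empty_or_nonempty F with hFe | hFne
    · rw [ha, hFe, Finset.sum_empty]; linarith
    · obtain ⟨j₀, hj₀F, hj₀max⟩ := Finset.exists_max_image F (fun j => c j / sw j) hFne
      have hrY : c j₀ / sw j₀ ∈ Y := by
        refine Finset.mem_insert_of_mem (Finset.mem_image.mpr ⟨j₀, ?_, rfl⟩)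
        exact Finset.mem_filter.mpr ⟨(Finset.mem_filter.mp hj₀F).1, haF j₀ hj₀F⟩
      have hrlt : c j₀ / sw j₀ < y0 :=
        (div_lt_iff₀ (haF j₀ hj₀F)).mpr (Finset.mem_filter.mp hj₀F).2
      have hsub2 : F ⊆ N.filter (fun j => c j ≤ (c j₀ / sw j₀) * sw j) := by
        intro j hj
        refine Finset.mem_filter.mpr ⟨(Finset.mem_filter.mp hj).1, ?_⟩
        exact (div_le_iff₀ (haF j hj)).mp (hj₀max j hj)
      have h1 : a ≤ S (c j₀ / sw j₀) :=
        Finset.sum_le_sum_of_subset_of_nonneg hsub2 fun j _ _ => hsw j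
      have h2 : S (c j₀ / sw j₀) < d := hminprop _ hrY hrlt
      linarith
  set θ := (d - a) / (s - a) with hθ
  have hθ0 : 0 ≤ θ := div_nonneg (by linarith) (by linarith)
  have hθ1 : θ ≤ 1 := by
    rcases eq_or_lt_of_le (by linarith : a ≤ s) with he | hlt
    · rw [hθ, ← he, sub_self, div_zero]; exact zero_le_one
    · exact (div_le_one (by linarith)).mpr (by linarith)
  have hkey : θ * (s - a) = d - a := by
    rcases eq_or_lt_of_le (by linarith : a ≤ s) with he | hlt
    · have hda : d = a := by rw [← he] at hds; linarith
      rw [← he, sub_self, mul_zero, hda, sub_self]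
    · rw [hθ]; exact div_mul_cancel₀ _ (ne_of_gt (by linarith))
  set p : Fin m → ℝ := fun j => if j ∈ F then 1 else if j ∈ T then θ else 0 with hp
  have hsumg : ∀ g : Fin m → ℝ, ∑ j, p j * g j = ∑ j ∈ F, g j + θ * ∑ j ∈ T \ F, g j := by
    intro g
    have h1 : ∑ j, p j * g j = ∑ j ∈ T, p j * g j := by
      refine (Finset.sum_subset (Finset.subset_univ T) ?_).symm
      intro j _ hj
      have hjF : j ∉ F := fun h => hj (hFT h)
      rw [hp]; simp only [if_neg hjF, if_neg hj, zero_mul]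
    have h2 : ∑ j ∈ T \ F, p j * g j + ∑ j ∈ F, p j * g j = ∑ j ∈ T, p j * g j :=
      Finset.sum_sdiff hFT
    have h3 : ∑ j ∈ F, p j * g j = ∑ j ∈ F, g j :=
      Finset.sum_congr rfl fun j hj => by rw [hp]; simp [if_pos hj]
    have h4 : ∑ j ∈ T \ F, p j * g j = θ * ∑ j ∈ T \ F, g j := by
      rw [Finset.mul_sum]
      refine Finset.sum_congr rfl fun j hj => ?_
      obtain ⟨hjT, hjF⟩ := Finset.mem_sdiff.mp hj
      rw [hp]; simp [if_neg hjF, if_pos hjT]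
    linarith
  have hTF : ∑ j ∈ T \ F, sw j = s - a := by
    have h := Finset.sum_sdiff (f := sw) hFT
    rw [← ha, ← hs] at h
    linarith
  have hwel : ∑ j, p j * sw j = d := by
    rw [hsumg sw, hTF, ← ha, hkey]
    ring
  have hfeas : FracFeasible sw f W p := by
    refine ⟨fun j => ?_, fun j hj => ?_, ?_⟩
    · rw [hp]; simp only
      split_ifs
      · exact ⟨zero_le_one, le_refl 1⟩
      · exact ⟨hθ0, hθ1⟩
      · exact ⟨le_refl 0, zero_le_one⟩
    · have hjN : j ∉ N := by rw [hN]; simpa using hj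
      have hjF : j ∉ F := fun h => hjN (Finset.mem_filter.mp h).1
      have hjT : j ∉ T := fun h => hjN (Finset.mem_filter.mp h).1
      rw [hp]; simp [if_neg hjF, if_neg hjT]
    · rw [hwel]; linarith
  have hNmax : ∑ j ∈ F, (y0 * sw j - c j) = ∑ j ∈ N, max (y0 * sw j - c j) 0 := by
    rw [hF, Finset.sum_filter]
    refine Finset.sum_congr rfl fun j _ => ?_
    split_ifs with h
    · exact (max_eq_left (by linarith)).symm
    · push_neg at h
      exact (max_eq_right (by linarith)).symm
  have hFsum : ∑ j ∈ F, (y0 * sw j - c j) = y0 * a - ∑ j ∈ F, c j := by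
    rw [Finset.sum_sub_distrib, ha, Finset.mul_sum]
  have hdual : dualVal c sw f y0 W = y0 * d - y0 * a + ∑ j ∈ F, c j := by
    rw [dualVal_eq c sw f y0 W, ← hN, ← hNmax, hFsum, ← hd]
    ring
  have hTcost : ∀ j ∈ T \ F, c j ≤ y0 * sw j := fun j hj =>
    (Finset.mem_filter.mp (Finset.mem_sdiff.mp hj).1).2
  have hcost : ∑ j, p j * c j ≤ dualVal c sw f y0 W := by
    rw [hsumg c, hdual]
    have h5 : θ * ∑ j ∈ T \ F, c j ≤ θ * ∑ j ∈ T \ F, (y0 * sw j) :=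
      mul_le_mul_of_nonneg_left (Finset.sum_le_sum hTcost) hθ0
    have h6 : ∑ j ∈ T \ F, (y0 * sw j) = y0 * (s - a) := by
      rw [← Finset.mul_sum, hTF]
    have h7 : θ * (y0 * (s - a)) = y0 * (d - a) := by
      rw [← mul_assoc, mul_comm θ y0, mul_assoc, hkey]
    nlinarith [h5, h6, h7]
  exact ⟨y0, hy0, le_trans (resid_le_cost c sw f hc hfeas) hcost⟩

end CoverAux

open CoverAux

/-- the per-district coverage function is nondecreasing and
submodular. -/
theorem cover_monotone_submodular {m : ℕ} (c sw : Fin m → ℝ) (f b : ℝ)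
    (hc : ∀ j, 0 ≤ c j) (hsw : ∀ j, 0 ≤ sw j) (hf : 0 ≤ f) (hb : 0 ≤ b)
    (hach : ∃ p, FracFeasible sw f ∅ p ∧ ∑ j, p j * c j ≤ b) :
    (∀ A B : Finset (Fin m), A ⊆ B → cover c sw f b A ≤ cover c sw f b B) ∧
    (∀ A B : Finset (Fin m), A ⊆ B → ∀ x ∉ B,
      cover c sw f b (insert x B) - cover c sw f b B ≤
        cover c sw f b (insert x A) - cover c sw f b A) := by
  obtain ⟨p₀, hp₀, -⟩ := hach
  have hne : ∀ W : Finset (Fin m), ∃ p, FracFeasible sw f W p :=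
    feas_nonempty c sw f hc hsw ⟨p₀, hp₀⟩
  constructor
  · intro A B hAB
    have := resid_mono c sw f hc hsw hAB (hne A)
    unfold cover
    linarith
  · intro A B hAB x hxB
    have hxA : x ∉ A := fun h => hxB (hAB h)
    -- reduce to an inequality about `resid`
    suffices h : resid c sw f B + resid c sw f (insert x A) ≤
        resid c sw f A + resid c sw f (insert x B) by
      unfold cover; linarith
    obtain ⟨y₁, hy₁, hstrong₁⟩ := strong_duality c sw f hc hsw (hne (insert x A))
    obtain ⟨y₂, hy₂, hstrong₂⟩ := strong_duality c sw f hc hsw (hne B)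
    have hiA := dualVal_insert c sw f y₁ (W := A) (x := x) hxA
    have hiB₁ := dualVal_insert c sw f y₁ (W := B) (x := x) hxB
    have hiB₂ := dualVal_insert c sw f y₂ (W := B) (x := x) hxB
    rcases le_total y₂ y₁ with hyy | hyy
    · -- use y₁ for A, y₂ for insert x B
      have hwA : dualVal c sw f y₁ A ≤ resid c sw f A :=
        dual_le_resid c sw f hc hy₁ (hne A)
      have hwB : dualVal c sw f y₂ (insert x B) ≤ resid c sw f (insert x B) :=
        dual_le_resid c sw f hc hy₂ (hne (insert x B))
      have hminx : min (y₂ * sw x) (c x) ≤ min (y₁ * sw x) (c x) :=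
        min_le_min (mul_le_mul_of_nonneg_right hyy (hsw x)) (le_refl _)
      linarith
    · -- use y₂ for A, y₁ for insert x B
      have hwA : dualVal c sw f y₂ A ≤ resid c sw f A :=
        dual_le_resid c sw f hc hy₂ (hne A)
      have hwB : dualVal c sw f y₁ (insert x B) ≤ resid c sw f (insert x B) :=
        dual_le_resid c sw f hc hy₁ (hne (insert x B))
      have hsd₁ := dualVal_sdiff c sw f y₁ hAB
      have hsd₂ := dualVal_sdiff c sw f y₂ hAB
      have hsum : ∑ j ∈ B \ A, min (y₁ * sw j) (c j) ≤
          ∑ j ∈ B \ A, min (y₂ * sw j) (c j) :=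
        Finset.sum_le_sum fun j _ =>
          min_le_min (mul_le_mul_of_nonneg_right hyy (hsw j)) (le_refl _)
      linarith
end

section
/- DF1 completion: given an outcome W with cover(W) = b − r (where b = ∑_i b_i and r ≥ 0), there exists a superset W' ⊇ W that is DF1 and satisfies c(W') ≤ c(W) + r. -/
open Finset

/-- An outcome is district-fair up to one project. -/
def DF1 {m k : ℕ} (sw : Fin k → Fin m → ℕ) (f : Fin k → ℝ)
    (W : Finset (Fin m)) : Prop :=
  ∀ i, f i ≤ (∑ j ∈ W, (sw i j : ℝ)) + (((Finset.univ \ W).sup (sw i) : ℕ) : ℝ)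

lemma DF1_completion_aux
    {m k : ℕ} (c : Fin m → ℝ) (sw : Fin k → Fin m → ℕ) (f : Fin k → ℝ)
    (b : ℝ) (cover : Finset (Fin m) → ℝ)
    (hc : ∀ j, 0 ≤ c j)
    (hcov_le : ∀ W : Finset (Fin m), cover W ≤ b)
    (hkey : ∀ W : Finset (Fin m), ¬ DF1 sw f W →
      ∃ x ∉ W, cover W + c x ≤ cover (insert x W)) :
    ∀ n : ℕ, ∀ W : Finset (Fin m), (Finset.univ \ W).card ≤ n →
      ∀ r : ℝ, 0 ≤ r → b - r ≤ cover W →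
    ∃ W' : Finset (Fin m), W ⊆ W' ∧ DF1 sw f W' ∧
      (∑ j ∈ W', c j) ≤ (∑ j ∈ W, c j) + r := by
  intro n
  induction n with
  | zero =>
    intro W hcard r hr hW
    refine ⟨W, Finset.Subset.refl W, ?_, by linarith⟩
    by_contra hnot
    obtain ⟨x, hx, _⟩ := hkey W hnot
    have : x ∈ Finset.univ \ W := by simp [hx]
    have := Finset.card_pos.mpr ⟨x, this⟩
    omega
  | succ n ih =>
    intro W hcard r hr hW
    by_cases hdf : DF1 sw f W
    · exact ⟨W, Finset.Subset.refl W, hdf, by linarith⟩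
    · obtain ⟨x, hx, hkx⟩ := hkey W hdf
      have hcx : c x ≤ r := by
        have := hcov_le (insert x W)
        linarith
      have hcard' : (Finset.univ \ insert x W).card ≤ n := by
        have hsub : Finset.univ \ insert x W ⊆ (Finset.univ \ W).erase x := by
          intro y hy
          simp only [Finset.mem_sdiff, Finset.mem_insert, Finset.mem_erase] at hy ⊢
          tauto
        have h1 := Finset.card_le_card hsub
        have hxmem : x ∈ Finset.univ \ W := by simp [hx]
        have h2 := Finset.card_erase_of_mem hxmem
        omega
      have hcov' : b - (r - c x) ≤ cover (insert x W) := by linarith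
      obtain ⟨W', hsub, hdf', hcost⟩ := ih (insert x W) hcard' (r - c x)
        (by linarith) hcov'
      refine ⟨W', Finset.Subset.trans (Finset.subset_insert x W) hsub, hdf', ?_⟩
      have : ∑ j ∈ insert x W, c j = c x + ∑ j ∈ W, c j :=
        Finset.sum_insert hx
      linarith

/-- DF1 completion.  Given a total coverage function `cover`
(bounded by the budget `b`, and such that any non-DF1 outcome admits a project
whose addition increases coverage by at least its cost), any outcome `W` with
`cover W = b - r` can be completed to a DF1 superset `W'` of extra cost at
most `r`. -/
theorem DF1_completion
    {m k : ℕ} (c : Fin m → ℝ) (sw : Fin k → Fin m → ℕ) (f : Fin k → ℝ)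
    (b : ℝ) (cover : Finset (Fin m) → ℝ)
    (hc : ∀ j, 0 ≤ c j)
    (hcov_le : ∀ W : Finset (Fin m), cover W ≤ b)
    (hkey : ∀ W : Finset (Fin m), ¬ DF1 sw f W →
      ∃ x ∉ W, cover W + c x ≤ cover (insert x W))
    (W : Finset (Fin m)) (r : ℝ) (hr : 0 ≤ r) (hW : cover W = b - r) :
    ∃ W' : Finset (Fin m), W ⊆ W' ∧ DF1 sw f W' ∧
      (∑ j ∈ W', c j) ≤ (∑ j ∈ W, c j) + r := by
  exact DF1_completion_aux c sw f b cover hc hcov_le hkey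
    (Finset.univ \ W).card W le_rfl r hr (le_of_eq hW.symm)
end

section
/- In the circular-preferences instance, the only district-fair budget-feasible integral outcome consists of all non-dummy projects: with k−1 non-dummy projects x_1,…,x_{k−1} of unit cost, budget b = k−1, and district i (for i ≤ k−1) valuing x_i at 1+ε and its cyclic successor at 1 with fair share f_i = 1+ε, every integral outcome W with c(W) ≤ b and sw_i(W) ≥ f_i for all i ≤ k−1 must contain every x_j with j ≤ k−1, hence W = {x_1,…,x_{k−1}}. -/
/-- in the circular-preferences instance, the only district-fair
budget-feasible integral outcome consists of all non-dummy projects. -/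
theorem circular_instance_unique_fair_outcome
    {n : ℕ} (hn : 2 ≤ n) (ε : ℝ) (hε0 : 0 < ε) (hε1 : ε < 1)
    (σ : Fin n → Fin n) (hσ : ∀ i, σ i ≠ i)
    (sw : Fin n → Fin (n + n) → ℝ)
    (hsw1 : ∀ i, sw i (Fin.castAdd n i) = 1 + ε)
    (hsw2 : ∀ i, sw i (Fin.castAdd n (σ i)) = 1)
    (hsw0 : ∀ i x, x ≠ Fin.castAdd n i → x ≠ Fin.castAdd n (σ i) → sw i x = 0)
    (W : Finset (Fin (n + n))) (hcard : W.card ≤ n)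
    (hfair : ∀ i, 1 + ε ≤ ∑ x ∈ W, sw i x) :
    W = Finset.univ.image (fun j : Fin n => Fin.castAdd n j) := by
  have hmem : ∀ i : Fin n, Fin.castAdd n i ∈ W := by
    intro i
    by_contra h
    have hb : ∑ x ∈ W, sw i x ≤ ∑ x ∈ W,
        (if x = Fin.castAdd n (σ i) then (1 : ℝ) else 0) := by
      apply Finset.sum_le_sum
      intro x hx
      by_cases hxe : x = Fin.castAdd n (σ i)
      · simp [hxe, hsw2 i]
      · have hxi : x ≠ Fin.castAdd n i := fun he => h (he ▸ hx)
        simp [hxe, hsw0 i x hxi hxe]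
    have hsum : ∑ x ∈ W, (if x = Fin.castAdd n (σ i) then (1 : ℝ) else 0) ≤ 1 := by
      rw [Finset.sum_ite_eq' W (Fin.castAdd n (σ i)) (fun _ => (1 : ℝ))]
      split <;> norm_num
    have := hfair i
    linarith
  have hsub : Finset.univ.image (fun j : Fin n => Fin.castAdd n j) ⊆ W := by
    intro x hx
    obtain ⟨j, _, rfl⟩ := Finset.mem_image.mp hx
    exact hmem j
  have hcardimg : (Finset.univ.image (fun j : Fin n => Fin.castAdd n j)).card = n := by
    rw [Finset.card_image_of_injective _ (Fin.castAdd_injective n n)]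
    simp
  exact (Finset.eq_of_subset_of_card_le hsub (by omega)).symm
end

section
/- In the X3C reduction instance, a district-fair budget-feasible outcome with social welfare at least 3n + (2n+M)M exists if and only if the underlying exact-3-cover instance has a solution. -/
open Finset

/-- Welfare in the X3C reduction instance: district `Sum.inl i` corresponds to
element `eᵢ` and values project `Sum.inl j` (set `Sⱼ`) at 1 iff `eᵢ ∈ Sⱼ`;
dummy districts `Sum.inr` value every dummy project `Sum.inr` at 1. -/
def swX3C {n m M D : ℕ} (S : Fin m → Finset (Fin (3 * n))) :
    Fin (3 * n) ⊕ Fin D → Fin m ⊕ Fin M → ℕ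
  | Sum.inl i, Sum.inl j => if i ∈ S j then 1 else 0
  | Sum.inl _, Sum.inr _ => 0
  | Sum.inr _, Sum.inl _ => 0
  | Sum.inr _, Sum.inr _ => 1

/-- in the X3C reduction instance (with `M = 3mn + 1`, `M` dummy
districts, `2n + M` dummy projects, unit costs, budget `3n + M`, and fair
shares `1`), a district-fair budget-feasible outcome of social welfare at
least `3n + (2n + M)·M` exists iff the X3C instance has a solution. -/
theorem x3c_reduction_correct (n m : ℕ) (hn : 0 < n)
    (S : Fin m → Finset (Fin (3 * n))) (hS : ∀ j, (S j).card = 3) :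
    (∃ W : Finset (Fin m ⊕ Fin (2 * n + (3 * m * n + 1))),
        W.card ≤ 3 * n + (3 * m * n + 1) ∧
        (∀ d : Fin (3 * n) ⊕ Fin (3 * m * n + 1),
          1 ≤ ∑ x ∈ W, swX3C S d x) ∧
        3 * n + (2 * n + (3 * m * n + 1)) * (3 * m * n + 1) ≤
          ∑ d : Fin (3 * n) ⊕ Fin (3 * m * n + 1), ∑ x ∈ W, swX3C S d x) ↔
      ∃ T : Finset (Fin m), T.card = n ∧ T.biUnion S = Finset.univ := by
  set M := 3 * m * n + 1 with hM
  -- helper: rewrite a sum over W as sums over toLeft/toRight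
  have hsplit : ∀ (W : Finset (Fin m ⊕ Fin (2 * n + M)))
      (f : Fin m ⊕ Fin (2 * n + M) → ℕ),
      ∑ x ∈ W, f x = (∑ j ∈ W.toLeft, f (Sum.inl j)) +
        ∑ k ∈ W.toRight, f (Sum.inr k) := by
    intro W f
    rw [← Finset.toLeft_disjSum_toRight (u := W), Finset.sum_disjSum,
      Finset.toLeft_disjSum, Finset.toRight_disjSum]
  constructor
  · rintro ⟨W, hcard, hfair, hwel⟩
    rcases Nat.eq_zero_or_pos m with hm | hm
    · exfalso
      have h0 := hfair (Sum.inl ⟨0, by omega⟩)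
      have : ∑ x ∈ W, swX3C (M := 2 * n + M) (D := M) S
          (Sum.inl (⟨0, by omega⟩ : Fin (3 * n))) x = 0 := by
        apply Finset.sum_eq_zero
        intro x hx
        rcases x with j | k
        · exact absurd j.2 (by omega)
        · rfl
      omega
    · set A := W.toLeft with hA
      set B := W.toRight with hB
      have hABcard : A.card + B.card = W.card := Finset.card_toLeft_add_card_toRight (u := W)
      have hAm : A.card ≤ m := by
        simpa using Finset.card_le_card (Finset.subset_univ A)
      have hBle : B.card ≤ 2 * n + M := by
        simpa using Finset.card_le_card (Finset.subset_univ B)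
      -- per-district sums
      have hreal : ∀ i : Fin (3 * n),
          ∑ x ∈ W, swX3C (M := 2 * n + M) (D := M) S (Sum.inl i) x
            = ∑ j ∈ A, if i ∈ S j then 1 else 0 := by
        intro i
        rw [hsplit W (swX3C S (Sum.inl i))]
        simp [swX3C, hA]
      have hdummy : ∀ d : Fin M,
          ∑ x ∈ W, swX3C (M := 2 * n + M) (D := M) S (Sum.inr d) x = B.card := by
        intro d
        rw [hsplit W (swX3C S (Sum.inr d))]
        simp [swX3C, hB]
      -- total welfare
      have htot : ∑ d : Fin (3 * n) ⊕ Fin M, ∑ x ∈ W, swX3C S d x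
          = 3 * A.card + M * B.card := by
        rw [Fintype.sum_sum_type]
        have h1 : ∑ i : Fin (3 * n), ∑ x ∈ W,
            swX3C (M := 2 * n + M) (D := M) S (Sum.inl i) x = 3 * A.card := by
          calc ∑ i : Fin (3 * n), ∑ x ∈ W, swX3C (M := 2 * n + M) (D := M) S (Sum.inl i) x
              = ∑ i : Fin (3 * n), ∑ j ∈ A, if i ∈ S j then 1 else 0 := by
                exact Finset.sum_congr rfl fun i _ => hreal i
            _ = ∑ j ∈ A, ∑ i : Fin (3 * n), if i ∈ S j then 1 else 0 :=
                Finset.sum_comm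
            _ = ∑ j ∈ A, (S j).card := by
                apply Finset.sum_congr rfl
                intro j _
                simp
            _ = ∑ j ∈ A, 3 := Finset.sum_congr rfl fun j _ => hS j
            _ = 3 * A.card := by rw [Finset.sum_const]; ring
        have h2 : ∑ d : Fin M, ∑ x ∈ W,
            swX3C (M := 2 * n + M) (D := M) S (Sum.inr d) x = M * B.card := by
          simp only [hdummy]
          simp [mul_comm]
        rw [h1, h2]
      rw [htot] at hwel
      -- deduce A.card = n
      have hMbig : 3 * m ≤ M - 1 := by
        have : 3 * m * 1 ≤ 3 * m * n := Nat.mul_le_mul_left _ hn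
        omega
      have hBcard : B.card = 2 * n + M := by
        by_contra h
        have hb1 : B.card + 1 ≤ 2 * n + M := by omega
        have h1 : M * (B.card + 1) ≤ M * (2 * n + M) := Nat.mul_le_mul_left M hb1
        have h2 : M * (B.card + 1) = M * B.card + M := by ring
        have h3 : (2 * n + M) * M = M * (2 * n + M) := Nat.mul_comm _ _
        have h4 : 3 * m ≤ 3 * m * n := Nat.le_mul_of_pos_right _ hn
        linarith
      have hAcard : A.card = n := by
        have h3 : (2 * n + M) * M = M * (2 * n + M) := Nat.mul_comm _ _
        rw [hBcard] at hwel hABcard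
        have hge : n ≤ A.card := by linarith
        omega
      refine ⟨A, hAcard, ?_⟩
      apply Finset.eq_univ_of_forall
      intro i
      have h1 := hfair (Sum.inl i)
      rw [hreal i] at h1
      by_contra hcon
      have : ∑ j ∈ A, (if i ∈ S j then 1 else 0) = 0 := by
        apply Finset.sum_eq_zero
        intro j hj
        have : i ∉ S j := fun hij => hcon (Finset.mem_biUnion.2 ⟨j, hj, hij⟩)
        simp [this]
      omega
  · rintro ⟨T, hT, hcov⟩
    refine ⟨T.disjSum Finset.univ, ?_, ?_, ?_⟩
    · rw [Finset.card_disjSum, hT]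
      simp
      omega
    · intro d
      rw [Finset.sum_disjSum]
      rcases d with i | k
      · have hi : i ∈ T.biUnion S := hcov ▸ Finset.mem_univ i
        obtain ⟨j, hjT, hij⟩ := Finset.mem_biUnion.1 hi
        calc 1 = swX3C (M := M) (D := M) S (Sum.inl i) (Sum.inl j) := by
              simp [swX3C, hij]
          _ ≤ ∑ j ∈ T, swX3C (M := M) (D := M) S (Sum.inl i) (Sum.inl j) :=
              Finset.single_le_sum
                (f := fun j => swX3C (M := M) (D := M) S (Sum.inl i) (Sum.inl j))
                (fun _ _ => Nat.zero_le _) hjT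
          _ ≤ _ := Nat.le_add_right _ _
      · have : ∑ x ∈ (Finset.univ : Finset (Fin (2 * n + M))),
            swX3C (n := n) S (Sum.inr k) (Sum.inr x) = 2 * n + M := by
          simp [swX3C]
        omega
    · have : ∑ d : Fin (3 * n) ⊕ Fin M, ∑ x ∈ T.disjSum (Finset.univ : Finset (Fin (2 * n + M))),
          swX3C (M := 2 * n + M) (D := M) S d x = 3 * n + (2 * n + M) * M := by
        rw [Fintype.sum_sum_type]
        have h1 : ∑ i : Fin (3 * n), ∑ x ∈ T.disjSum (Finset.univ : Finset (Fin (2 * n + M))),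
            swX3C (M := 2 * n + M) (D := M) S (Sum.inl i) x = 3 * n := by
          calc ∑ i : Fin (3 * n), ∑ x ∈ T.disjSum (Finset.univ : Finset (Fin (2 * n + M))),
                swX3C (M := 2 * n + M) (D := M) S (Sum.inl i) x
              = ∑ i : Fin (3 * n), ∑ j ∈ T, if i ∈ S j then 1 else 0 := by
                apply Finset.sum_congr rfl
                intro i _
                rw [Finset.sum_disjSum]
                simp [swX3C]
            _ = ∑ j ∈ T, ∑ i : Fin (3 * n), if i ∈ S j then 1 else 0 := Finset.sum_comm
            _ = ∑ j ∈ T, (S j).card := by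
                apply Finset.sum_congr rfl; intro j _; simp
            _ = ∑ j ∈ T, 3 := Finset.sum_congr rfl fun j _ => hS j
            _ = 3 * n := by rw [Finset.sum_const, hT]; ring
        have h2 : ∑ d : Fin M, ∑ x ∈ T.disjSum (Finset.univ : Finset (Fin (2 * n + M))),
            swX3C (M := 2 * n + M) (D := M) S (Sum.inr d) x = (2 * n + M) * M := by
          have : ∀ d : Fin M, ∑ x ∈ T.disjSum (Finset.univ : Finset (Fin (2 * n + M))),
              swX3C (n := n) S (Sum.inr d) x = 2 * n + M := by
            intro d
            rw [Finset.sum_disjSum]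
            simp [swX3C]
          simp only [this]
          simp [mul_comm]
        rw [h1, h2]
      omega
end
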